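/- arXiv:1909.12039 — 10 statements merged into one kernel-verified Lean document; each statement's English description precedes it below -/
import Mathlib

section
/- Let {R_α}_{α ∈ A} be a family of rings (associative with unity) and for each α let I_α be a two-sided ideal of R_α. Then the product ring R = Π_α R_α is weakly I-clean for the product ideal I = Π_α I_α if and only if each R_α is weakly I_α-clean and at most one R_α fails to be I_α-clean. -/
/-- A ring `R` is `I`-clean if every element is the sum of an idempotent and
an element of the two-sided ideal `I`. -/
def IsIdealClean {R : Type*} [Ring R] (I : TwoSidedIdeal R) : Prop :=
  ∀ x : R, ∃ e : R, IsIdempotentElem e ∧ x - e ∈ I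

/-- A ring `R` is weakly `I`-clean if for every `x` there is an idempotent `e`
with `x - e ∈ I` or `x + e ∈ I`. -/
def IsWeaklyIdealClean {R : Type*} [Ring R] (I : TwoSidedIdeal R) : Prop :=
  ∀ x : R, ∃ e : R, IsIdempotentElem e ∧ (x - e ∈ I ∨ x + e ∈ I)

/-- The product ring `Π α, R α` is weakly clean with respect to the product ideal
`Π α, I α` (membership being componentwise membership) if and only if each `R α` is
weakly `I α`-clean and at most one `R α` fails to be `I α`-clean. -/
theorem weaklyIdealClean_pi_iff {A : Type*} (R : A → Type*) [∀ α, Ring (R α)]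
    (I : ∀ α, TwoSidedIdeal (R α)) :
    (∀ x : (∀ α, R α), ∃ e : (∀ α, R α), IsIdempotentElem e ∧
        ((∀ α, x α - e α ∈ I α) ∨ (∀ α, x α + e α ∈ I α))) ↔
      ((∀ α, IsWeaklyIdealClean (I α)) ∧
        ∀ α β : A, ¬ IsIdealClean (I α) → ¬ IsIdealClean (I β) → α = β) := by
  classical
  constructor
  · intro h
    constructor
    · intro α x
      obtain ⟨e, he, hx⟩ := h (Pi.single α x)
      refine ⟨e α, congrFun he α, ?_⟩
      rcases hx with hx | hx
      · left; simpa using hx α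
      · right; simpa using hx α
    · intro α β hα hβ
      by_contra hne
      simp only [IsIdealClean, not_forall] at hα hβ
      obtain ⟨a, ha⟩ := hα
      obtain ⟨b, hb⟩ := hβ
      push_neg at ha hb
      obtain ⟨e, he, hx⟩ := h (Pi.single α a + Pi.single β (-b))
      rcases hx with hx | hx
      · refine ha (e α) (congrFun he α) ?_
        have := hx α
        simpa [Pi.single_eq_of_ne hne] using this
      · refine hb (e β) (congrFun he β) ?_
        have h1 := hx β
        have h2 : -b + e β ∈ I β := by
          simpa [Pi.single_eq_of_ne (Ne.symm hne)] using h1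
        have h3 := (I β).neg_mem h2
        simpa [sub_eq_add_neg, neg_add, add_comm] using h3
  · rintro ⟨h1, h2⟩ x
    by_cases hall : ∀ α, IsIdealClean (I α)
    · choose e he hxe using fun α => hall α (x α)
      exact ⟨e, funext he, Or.inl hxe⟩
    · push_neg at hall
      obtain ⟨α₀, hα₀⟩ := hall
      have hclean : ∀ α, α ≠ α₀ → IsIdealClean (I α) := by
        intro α hne
        by_contra h
        exact hne (h2 α α₀ h hα₀)
      obtain ⟨e₀, he₀, hcase⟩ := h1 α₀ (x α₀)
      rcases hcase with hc | hc
      · have key : ∀ α, ∃ f : R α, IsIdempotentElem f ∧ x α - f ∈ I α := by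
          intro α
          by_cases hα : α = α₀
          · subst hα; exact ⟨e₀, he₀, hc⟩
          · exact hclean α hα (x α)
        choose f hf hxf using key
        exact ⟨f, funext hf, Or.inl hxf⟩
      · have key : ∀ α, ∃ f : R α, IsIdempotentElem f ∧ x α + f ∈ I α := by
          intro α
          by_cases hα : α = α₀
          · subst hα; exact ⟨e₀, he₀, hc⟩
          · obtain ⟨f, hf, hxf⟩ := hclean α hα (-(x α))
            refine ⟨f, hf, ?_⟩
            have h3 := (I α).neg_mem hxf
            simpa [sub_eq_add_neg, neg_add, add_comm] using h3
        choose f hf hxf using key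
        exact ⟨f, funext hf, Or.inr hxf⟩
end

section
/- If R is a ring and I is a two-sided ideal of R such that R is weakly I-clean, then the Jacobson radical J(R) is contained in I. -/
/-- If `R` is weakly `I`-clean, then the Jacobson radical `J(R)` is contained in `I`. -/
theorem jacobson_le_of_weaklyIdealClean {R : Type*} [Ring R] (I : TwoSidedIdeal R)
    (h : IsWeaklyIdealClean I) :
    TwoSidedIdeal.jacobson (⊥ : TwoSidedIdeal R) ≤ I := by
  intro x hx
  rw [TwoSidedIdeal.mem_jacobson_iff] at hx
  obtain ⟨e, he, hi | hi⟩ := h x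
  · -- x - e ∈ I; get left inverse z of (1 - x)
    obtain ⟨z, hz⟩ := hx (-1)
    rw [TwoSidedIdeal.mem_bot, sub_eq_zero] at hz
    have hz' : z * (1 - x) = 1 := by rw [mul_sub, mul_one, ← hz]; noncomm_ring
    -- (1-e)*e = 0, and e = x - (x - e)
    have h1 : (1 - x) * e = -((x - e) * e) := by
      have : (1 - e) * e = 0 := by
        rw [sub_mul, one_mul, he.eq, sub_self]
      have : (1 - x + (x - e)) * e = 0 := by
        rw [show (1 - x + (x - e)) = 1 - e by abel]; exact this
      rw [add_mul] at this
      exact eq_neg_of_add_eq_zero_left this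
    have heI : e ∈ I := by
      have : z * ((1 - x) * e) ∈ I := by
        rw [h1]
        exact I.mul_mem_left _ _ (I.neg_mem (I.mul_mem_right _ _ hi))
      rwa [← mul_assoc, hz', one_mul] at this
    have := I.add_mem hi heI
    rwa [sub_add_cancel] at this
  · -- x + e ∈ I; get left inverse z of (1 + x)
    obtain ⟨z, hz⟩ := hx 1
    rw [TwoSidedIdeal.mem_bot, sub_eq_zero] at hz
    have hz' : z * (1 + x) = 1 := by rw [mul_add, mul_one, ← hz]; noncomm_ring
    have h1 : (1 + x) * e = (x + e) * e := by
      have h0 : (1 - e) * e = 0 := by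
        rw [sub_mul, one_mul, he.eq, sub_self]
      have : (1 + x - (x + e)) * e = 0 := by
        rw [show (1 + x - (x + e)) = 1 - e by abel]; exact h0
      rw [sub_mul] at this
      exact sub_eq_zero.mp this
    have heI : e ∈ I := by
      have : z * ((1 + x) * e) ∈ I := by
        rw [h1]
        exact I.mul_mem_left _ _ (I.mul_mem_right _ _ hi)
      rwa [← mul_assoc, hz', one_mul] at this
    have := I.sub_mem hi heI
    rwa [add_sub_cancel_right] at this
end

section
/- Let R be a ring and suppose e = f + n, where e and f are idempotents of R, n is a nilpotent element of R, and f is central in R. Then n = 0. -/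
/-- If `e = f + n` where `e, f` are idempotents, `n` is nilpotent and `f` is central,
then `n = 0`. -/
theorem nilpotent_eq_zero_of_idem_add {R : Type*} [Ring R] (e f n : R)
    (he : IsIdempotentElem e) (hf : IsIdempotentElem f) (hn : IsNilpotent n)
    (hcentral : ∀ r : R, f * r = r * f) (h : e = f + n) : n = 0 := by
  obtain ⟨k, hk⟩ := hn
  have hc : f * n = n * f := hcentral n
  set u : R := 1 - 2 * f with hu
  have hcu : Commute n u := by
    show n * u = u * n
    have e1 : n * (1 - 2 * f) = n - 2 * (f * n) := by rw [hc]; noncomm_ring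
    have e2 : (1 - 2 * f) * n = n - 2 * (f * n) := by noncomm_ring
    rw [hu, e1, e2]
  have hee : (f + n) * (f + n) = f + n := by rw [← h]; exact he
  have expand : (f + n) * (f + n) = f * f + (f * n + (n * f + n * n)) := by
    noncomm_ring
  rw [expand, hf, hc] at hee
  have h2 : n * f + (n * f + n * n) = n := add_left_cancel hee
  have h3 : n * n = n - 2 * (n * f) := by
    rw [eq_sub_iff_add_eq]
    have : n * n + 2 * (n * f) = n * f + (n * f + n * n) := by noncomm_ring
    rw [this]; exact h2
  have key : n = n * (n * u) := by
    have : n * (n * u) = n * n - 2 * ((n * n) * f) := by rw [hu]; noncomm_ring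
    rw [this, h3]
    have : (n - 2 * (n * f)) - 2 * ((n - 2 * (n * f)) * f)
        = n - 4 * (n * f) + 4 * (n * (f * f)) := by noncomm_ring
    rw [this, hf]
    noncomm_ring
  have main : n = n * (n * u) ^ k := by
    clear hk
    induction k with
    | zero => simp
    | succ m ih => rw [pow_succ, ← mul_assoc, ← ih]; exact key
  rw [main, hcu.mul_pow, hk, zero_mul, mul_zero]
end

section
/- Let R be a ring all of whose idempotents are central, let n be a positive integer, and let S be the subring of the n×n upper triangular matrix ring over R consisting of those upper triangular matrices all of whose diagonal entries are equal. Then the idempotents of S are exactly the matrices e·Iₙ where e is an idempotent of R and Iₙ is the identity matrix. -/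
/-- If all idempotents of `R` are central, then the idempotents of the ring `S` of
`n × n` upper triangular matrices over `R` with all diagonal entries equal are exactly
the scalar matrices `e • Iₙ` with `e` an idempotent of `R`. -/
theorem idempotent_triangular_const_diag_iff {R : Type*} [Ring R]
    (hcentral : ∀ e : R, IsIdempotentElem e → ∀ r : R, e * r = r * e)
    (n : ℕ) (hn : 0 < n) (A : Matrix (Fin n) (Fin n) R) :
    ((∀ i j : Fin n, j < i → A i j = 0) ∧ (∀ i j : Fin n, A i i = A j j) ∧
        IsIdempotentElem A) ↔
      ∃ e : R, IsIdempotentElem e ∧ A = e • (1 : Matrix (Fin n) (Fin n) R) := by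
  constructor
  · rintro ⟨htri, hdiag, hidem⟩
    set z : Fin n := ⟨0, hn⟩
    set e : R := A z z with he_def
    have h3 : A * A = A := hidem
    -- e is idempotent
    have he : IsIdempotentElem e := by
      have h := congrFun (congrFun h3 z) z
      rw [Matrix.mul_apply] at h
      rw [Fintype.sum_eq_single z (fun k hk => ?_)] at h
      · exact h
      · rcases lt_or_gt_of_ne hk with h1 | h1
        · rw [htri z k h1, zero_mul]
        · rw [htri k z h1, mul_zero]
    -- off-diagonal entries vanish
    have key : ∀ d : ℕ, ∀ i j : Fin n, i < j → (j : ℕ) - i = d → A i j = 0 := by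
      intro d
      induction d using Nat.strong_induction_on with
      | _ d ih =>
        intro i j hij hd
        have h := congrFun (congrFun h3 i) j
        rw [Matrix.mul_apply] at h
        have hij' : i ≠ j := ne_of_lt hij
        rw [Fintype.sum_eq_add i j hij' (fun k ⟨hki, hkj⟩ => ?_)] at h
        · -- h : A i i * A i j + A i j * A j j = A i j
          have hii : A i i = e := hdiag i z
          have hjj : A j j = e := hdiag j z
          rw [hii, hjj, hcentral e he (A i j)] at h
          -- h : A i j * e + A i j * e = A i j
          have h5 : A i j * e = A i j * e + A i j * e := by
            nth_rewrite 1 [← h]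
            rw [add_mul, mul_assoc, he.eq]
          have h6 : A i j * e = 0 := (left_eq_add.mp h5)
          rw [h6, zero_add] at h
          exact h.symm
        · -- middle terms
          rcases lt_trichotomy k i with h1 | h1 | h1
          · rw [htri i k h1, zero_mul]
          · exact absurd h1 hki
          · rcases lt_trichotomy k j with h2 | h2 | h2
            · have : A i k = 0 := by
                refine ih ((k : ℕ) - i) ?_ i k h1 rfl
                omega
              rw [this, zero_mul]
            · exact absurd h2 hkj
            · rw [htri k j h2, mul_zero]
    refine ⟨e, he, ?_⟩
    ext i j
    rcases lt_trichotomy i j with h1 | h1 | h1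
    · rw [key ((j : ℕ) - i) i j h1 rfl]
      simp [Matrix.one_apply, ne_of_lt h1]
    · subst h1
      simp [Matrix.one_apply, hdiag i z, he_def]
    · rw [htri i j h1]
      simp [Matrix.one_apply, (ne_of_lt h1).symm]
  · rintro ⟨e, he, rfl⟩
    refine ⟨?_, ?_, ?_⟩
    · intro i j hji
      simp [Matrix.one_apply, (ne_of_lt hji).symm]
    · intro i j
      simp [Matrix.one_apply]
    · show (e • 1) * (e • 1) = e • (1 : Matrix (Fin n) (Fin n) R)
      ext i j
      simp [Matrix.mul_apply, Matrix.one_apply, mul_ite, ite_mul, mul_zero,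
        zero_mul, mul_one, Finset.sum_ite_eq, he.eq]
end

section
/- Let R be a ring all of whose idempotents are central, let I be a two-sided ideal of R such that R is weakly I-clean, and let n be a positive integer. Let S be the subring of the n×n upper triangular matrix ring over R consisting of upper triangular matrices with all diagonal entries equal, and let I' = { [a_{ij}] ∈ S : the common diagonal entry a_{ii} lies in I }. Then I' is a two-sided ideal of S and S is weakly I'-clean: for every A ∈ S there exists an idempotent E ∈ S with A - E ∈ I' or A + E ∈ I'. -/
/-- The subring `S` of the `n × n` upper triangular matrix ring over `R` consisting of
upper triangular matrices all of whose diagonal entries are equal. -/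
def triangularConstDiag (R : Type*) [Ring R] (n : ℕ) :
    Subring (Matrix (Fin n) (Fin n) R) where
  carrier := {A | (∀ i j : Fin n, j < i → A i j = 0) ∧ ∀ i j : Fin n, A i i = A j j}
  zero_mem' := ⟨fun _ _ _ => rfl, fun _ _ => rfl⟩
  one_mem' := ⟨fun i j hij => Matrix.one_apply_ne (ne_of_gt hij),
    fun i j => by rw [Matrix.one_apply_eq, Matrix.one_apply_eq]⟩
  add_mem' := fun {A B} hA hB =>
    ⟨fun i j hij => by simp [Matrix.add_apply, hA.1 i j hij, hB.1 i j hij],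
      fun i j => by simp [Matrix.add_apply, hA.2 i j, hB.2 i j]⟩
  neg_mem' := fun {A} hA =>
    ⟨fun i j hij => by simp [Matrix.neg_apply, hA.1 i j hij],
      fun i j => by simp [Matrix.neg_apply, hA.2 i j]⟩
  mul_mem' := fun {A B} hA hB => by
    have key : ∀ i : Fin n, (A * B) i i = A i i * B i i := by
      intro i
      rw [Matrix.mul_apply]
      refine Finset.sum_eq_single i (fun k _ hk => ?_) (fun h => absurd (Finset.mem_univ i) h)
      rcases lt_or_gt_of_ne hk with h | h
      · rw [hA.1 i k h, zero_mul]
      · rw [hB.1 k i h, mul_zero]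
    refine ⟨fun i j hij => ?_, fun i j => by rw [key i, key j, hA.2 i j, hB.2 i j]⟩
    rw [Matrix.mul_apply]
    refine Finset.sum_eq_zero fun k _ => ?_
    rcases lt_or_ge k i with h | h
    · rw [hA.1 i k h, zero_mul]
    · rw [hB.1 k j (lt_of_lt_of_le hij h), mul_zero]

lemma triangularConstDiag_mul_diag {R : Type*} [Ring R] {n : ℕ}
    (A B : triangularConstDiag R n) (i : Fin n) :
    ((A * B : triangularConstDiag R n) : Matrix (Fin n) (Fin n) R) i i =
      (A : Matrix (Fin n) (Fin n) R) i i * (B : Matrix (Fin n) (Fin n) R) i i := by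
  have hA := A.2.1
  have hB := B.2.1
  show ((A : Matrix (Fin n) (Fin n) R) * B) i i = _
  rw [Matrix.mul_apply]
  refine Finset.sum_eq_single i (fun k _ hk => ?_) (fun h => absurd (Finset.mem_univ i) h)
  rcases lt_or_gt_of_ne hk with h | h
  · rw [hA i k h, zero_mul]
  · rw [hB k i h, mul_zero]

/-- If all idempotents of `R` are central and `R` is weakly `I`-clean, then
`I' = {A ∈ S | the (common) diagonal entries of A lie in I}` is a two-sided ideal of `S`
and `S` is weakly `I'`-clean. -/
theorem triangularConstDiag_weaklyIdealClean {R : Type*} [Ring R]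
    (hcentral : ∀ e : R, IsIdempotentElem e → ∀ r : R, e * r = r * e)
    (I : TwoSidedIdeal R) (hI : IsWeaklyIdealClean I) (n : ℕ) (hn : 0 < n) :
    ∃ I' : TwoSidedIdeal (triangularConstDiag R n),
      (∀ A : triangularConstDiag R n,
        A ∈ I' ↔ ∀ i : Fin n, (A : Matrix (Fin n) (Fin n) R) i i ∈ I) ∧
      IsWeaklyIdealClean I' := by
  refine ⟨TwoSidedIdeal.mk'
    {A : triangularConstDiag R n | ∀ i : Fin n, (A : Matrix (Fin n) (Fin n) R) i i ∈ I}
    (fun i => I.zero_mem)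
    (fun {x y} hx hy i => by
      simpa [Matrix.add_apply] using I.add_mem (hx i) (hy i))
    (fun {x} hx i => by simpa [Matrix.neg_apply] using I.neg_mem (hx i))
    (fun {x y} hy i => by
      rw [triangularConstDiag_mul_diag]; exact I.mul_mem_left _ _ (hy i))
    (fun {x y} hx i => by
      rw [triangularConstDiag_mul_diag]; exact I.mul_mem_right _ _ (hx i)),
    fun A => TwoSidedIdeal.mem_mk' _ _ _ _ _ _ A, ?_⟩
  intro A
  obtain ⟨e, he, hc⟩ := hI ((A : Matrix (Fin n) (Fin n) R) ⟨0, hn⟩ ⟨0, hn⟩)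
  have hEmem : (Matrix.diagonal (fun _ => e) : Matrix (Fin n) (Fin n) R) ∈
      triangularConstDiag R n := by
    refine ⟨fun i j hij => Matrix.diagonal_apply_ne _ (ne_of_gt hij), fun i j => by
      simp [Matrix.diagonal_apply_eq]⟩
  refine ⟨⟨Matrix.diagonal (fun _ => e), hEmem⟩, ?_, ?_⟩
  · apply Subtype.ext
    show (Matrix.diagonal (fun _ => e) : Matrix (Fin n) (Fin n) R) *
      Matrix.diagonal (fun _ => e) = Matrix.diagonal (fun _ => e)
    rw [Matrix.diagonal_mul_diagonal]
    simp [he.eq]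
  · have hdiag : ∀ i : Fin n, (A : Matrix (Fin n) (Fin n) R) i i =
        (A : Matrix (Fin n) (Fin n) R) ⟨0, hn⟩ ⟨0, hn⟩ := fun i => A.2.2 i _
    rcases hc with h | h
    · left
      refine (TwoSidedIdeal.mem_mk' _ _ _ _ _ _ _).mpr ?_
      intro i
      show ((A : Matrix (Fin n) (Fin n) R) - (Matrix.diagonal (fun _ => e) : Matrix (Fin n) (Fin n) R)) i i ∈ I
      simpa [Matrix.sub_apply, hdiag i] using h
    · right
      refine (TwoSidedIdeal.mem_mk' _ _ _ _ _ _ _).mpr ?_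
      intro i
      show ((A : Matrix (Fin n) (Fin n) R) + (Matrix.diagonal (fun _ => e) : Matrix (Fin n) (Fin n) R)) i i ∈ I
      simpa [Matrix.add_apply, hdiag i] using h
end

section
/- Let I be a two-sided ideal of a ring R such that R is uniquely weakly I-clean. Then I is idempotent free: the only idempotent element of R lying in I is 0. -/
/-- A ring `R` is uniquely weakly `I`-clean if for every `x` there is a unique idempotent
`e` such that `x - e ∈ I` or `x + e ∈ I`. -/
def IsUniquelyWeaklyIdealClean {R : Type*} [Ring R] (I : TwoSidedIdeal R) : Prop :=
  ∀ x : R, ∃! e : R, IsIdempotentElem e ∧ (x - e ∈ I ∨ x + e ∈ I)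

/-- If `R` is uniquely weakly `I`-clean, then `I` is idempotent free. -/
theorem idempotent_free_of_uniquelyWeaklyIdealClean {R : Type*} [Ring R]
    (I : TwoSidedIdeal R) (h : IsUniquelyWeaklyIdealClean I) :
    ∀ e : R, IsIdempotentElem e → e ∈ I → e = 0 := by
  intro e he heI
  obtain ⟨c, _, hu⟩ := h e
  have h1 : e = c := hu e ⟨he, Or.inl (by simp)⟩
  have h2 : (0 : R) = c := hu 0 ⟨IsIdempotentElem.zero, Or.inl (by simpa using heI)⟩
  rw [h1, ← h2]
end

section
/- Let I be a two-sided ideal of a ring R such that R is uniquely weakly I-clean. Then R is abelian: every idempotent of R is central. -/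
/-- If `R` is uniquely weakly `I`-clean, then `R` is abelian: every idempotent is
central. -/
theorem abelian_of_uniquelyWeaklyIdealClean {R : Type*} [Ring R]
    (I : TwoSidedIdeal R) (h : IsUniquelyWeaklyIdealClean I) :
    ∀ e : R, IsIdempotentElem e → ∀ r : R, e * r = r * e := by
  -- Uniqueness: two idempotents that differ by an element of `I` are equal.
  have uniq : ∀ p q : R, IsIdempotentElem p → IsIdempotentElem q → p - q ∈ I → p = q := by
    intro p q hp hq hpq
    obtain ⟨z, _, hu⟩ := h p
    have h1 : p = z := hu p ⟨hp, Or.inl (by simp [I.zero_mem])⟩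
    have h2 : q = z := hu q ⟨hq, Or.inl hpq⟩
    exact h1.trans h2.symm
  -- Every square-zero element lies in `I`.
  have memI : ∀ a : R, a * a = 0 → a ∈ I := by
    intro a ha
    obtain ⟨g, ⟨hg, hmem⟩, _⟩ := h a
    have hgI : g ∈ I := by
      rcases hmem with hm | hm
      · have hga : g - a ∈ I := by simpa using I.neg_mem hm
        have key : g * (g - a) + (g - a) * a = g := by
          rw [mul_sub, sub_mul, hg, ha]; abel
        exact key ▸ I.add_mem (I.mul_mem_left _ _ hga) (I.mul_mem_right _ _ hga)
      · have key : g * (a + g) - (a + g) * a = g := by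
          rw [mul_add, add_mul, hg, ha]; abel
        exact key ▸ I.sub_mem (I.mul_mem_left _ _ hm) (I.mul_mem_right _ _ hm)
    have hg0 : g = 0 := uniq g 0 hg (by simp [IsIdempotentElem]) (by simpa using hgI)
    rcases hmem with hm | hm <;> simpa [hg0] using hm
  -- Every square-zero element `a` with `e * a = a`, `a * e = 0` (or the symmetric
  -- situation) gives an idempotent `e + a` congruent to `e` mod `I`, so `a = 0`.
  have kill : ∀ (e a : R), IsIdempotentElem e → e * a + a * e = a → a * a = 0 → a = 0 := by
    intro e a he hea haa
    have hf : IsIdempotentElem (e + a) := by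
      show (e + a) * (e + a) = e + a
      rw [add_mul, mul_add, mul_add, he, haa]
      rw [add_assoc, ← add_assoc (e*a), hea, add_zero]
    have haI : a ∈ I := memI a haa
    have : e + a = e := uniq (e + a) e hf he (by simpa using haI)
    exact add_eq_left.mp this
  intro e he r
  set a := e * r - e * r * e with ha_def
  set b := r * e - e * r * e with hb_def
  have hea : e * a = a := by
    rw [ha_def, mul_sub, ← mul_assoc, he, ← mul_assoc, ← mul_assoc, he]
  have hae : a * e = 0 := by
    rw [ha_def, sub_mul, mul_assoc (e * r) e e, he, sub_self]
  have haa : a * a = 0 := by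
    have h1 : a * a = (a * e) * a := by rw [mul_assoc, hea]
    rw [h1, hae, zero_mul]
  have hbe : b * e = b := by
    rw [hb_def, sub_mul, mul_assoc r e e, he, mul_assoc (e * r) e e, he]
  have heb : e * b = 0 := by
    simp [hb_def, mul_sub, ← mul_assoc, he.eq]
  have hbb : b * b = 0 := by
    have h1 : b * b = (b * e) * b := by rw [hbe]
    rw [h1, mul_assoc, heb, mul_zero]
  have ha0 : a = 0 := kill e a he (by rw [hea, hae, add_zero]) haa
  have hb0 : b = 0 := kill e b he (by rw [heb, hbe, zero_add]) hbb
  have h1 : e * r = e * r * e := by rwa [sub_eq_zero] at ha0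
  have h2 : r * e = e * r * e := by rwa [sub_eq_zero] at hb0
  rw [h1, h2]
end

section
/- Let I be a two-sided ideal of a ring R. Then R is uniquely weakly I-clean if and only if R/I is semi boolean and idempotents lift uniquely weakly modulo I. -/
lemma quot_eq_iff {R : Type*} [Ring R] (I : TwoSidedIdeal R) (x y : R) :
    (x : I.ringCon.Quotient) = (y : I.ringCon.Quotient) ↔ x - y ∈ I := by
  rw [← I.rel_iff]
  exact ⟨Quotient.exact, fun h => Quotient.sound h⟩

/-- `R` is uniquely weakly `I`-clean if and only if `R/I` is semi boolean and idempotents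
lift uniquely weakly modulo `I`. -/
theorem uniquelyWeaklyIdealClean_iff {R : Type*} [Ring R] (I : TwoSidedIdeal R) :
    (∀ x : R, ∃! e : R, IsIdempotentElem e ∧ (x - e ∈ I ∨ x + e ∈ I)) ↔
      ((∀ y : I.ringCon.Quotient, y ^ 2 = y ∨ y ^ 2 = -y) ∧
        ∀ x : R, x ^ 2 - x ∈ I →
          ∃! e : R, IsIdempotentElem e ∧ (x - e ∈ I ∨ x + e ∈ I)) := by
  constructor
  · intro h
    refine ⟨fun y => ?_, fun x _ => h x⟩
    obtain ⟨x, rfl⟩ := Quotient.exists_rep y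
    show ((x : I.ringCon.Quotient)) ^ 2 = x ∨ ((x : I.ringCon.Quotient)) ^ 2 = -x
    obtain ⟨e, ⟨he, hxe⟩, -⟩ := h x
    have hx : (x : I.ringCon.Quotient) = e ∨ (x : I.ringCon.Quotient) = -e := by
      rcases hxe with h1 | h1
      · exact Or.inl ((quot_eq_iff I x e).2 h1)
      · refine Or.inr ?_
        rw [← RingCon.coe_neg]
        exact (quot_eq_iff I x (-e)).2 (by simpa [sub_neg_eq_add] using h1)
    have hee : ((e : I.ringCon.Quotient)) ^ 2 = e := by
      rw [← RingCon.coe_pow, sq]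
      exact congrArg _ he
    rcases hx with h1 | h1
    · left; rw [h1, hee]
    · right; rw [h1, neg_pow, hee]; ring_nf; simp [pow_two]
  · rintro ⟨hsb, hlift⟩ x
    rcases hsb (x : I.ringCon.Quotient) with h1 | h1
    · apply hlift
      rw [← quot_eq_iff I (x ^ 2) x, RingCon.coe_pow]
      exact h1
    · have hx : (-x) ^ 2 - (-x) ∈ I := by
        rw [← quot_eq_iff I ((-x) ^ 2) (-x), RingCon.coe_pow, RingCon.coe_neg, neg_pow]
        simpa using h1
      obtain ⟨e, ⟨he, hxe⟩, hu⟩ := hlift (-x) hx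
      refine ⟨e, ⟨he, ?_⟩, fun e' ⟨he', hxe'⟩ => ?_⟩
      · rcases hxe with h2 | h2
        · right
          have : x + e = -(-x - e) := by abel
          rw [this]; exact I.neg_mem h2
        · left
          have : x - e = -(-x + e) := by abel
          rw [this]; exact I.neg_mem h2
      · apply hu
        refine ⟨he', ?_⟩
        rcases hxe' with h2 | h2
        · right
          have : -x + e' = -(x - e') := by abel
          rw [this]; exact I.neg_mem h2
        · left
          have : -x - e' = -(x + e') := by abel
          rw [this]; exact I.neg_mem h2
end

section
/- For a ring R, R is uniquely weakly J-clean if and only if R/J(R) is semi boolean and idempotents lift uniquely weakly modulo J(R). -/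
theorem aux_mem_iff {R : Type*} [Ring R] (I : TwoSidedIdeal R) (x : R) :
    x ∈ I ↔ (x : I.ringCon.Quotient) = 0 := by
  rw [TwoSidedIdeal.mem_iff, ← RingCon.coe_zero, RingCon.eq]

/-- `R` is uniquely weakly `J`-clean if and only if `R/J(R)` is semi boolean and
idempotents lift uniquely weakly modulo `J(R)`. -/
theorem uniquelyWeaklyJClean_iff {R : Type*} [Ring R] :
    (∀ x : R, ∃! e : R, IsIdempotentElem e ∧
        (x - e ∈ TwoSidedIdeal.jacobson (⊥ : TwoSidedIdeal R) ∨
          x + e ∈ TwoSidedIdeal.jacobson (⊥ : TwoSidedIdeal R))) ↔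
      ((∀ y : (TwoSidedIdeal.jacobson (⊥ : TwoSidedIdeal R)).ringCon.Quotient,
          y ^ 2 = y ∨ y ^ 2 = -y) ∧
        ∀ x : R, x ^ 2 - x ∈ TwoSidedIdeal.jacobson (⊥ : TwoSidedIdeal R) →
          ∃! e : R, IsIdempotentElem e ∧
            (x - e ∈ TwoSidedIdeal.jacobson (⊥ : TwoSidedIdeal R) ∨
              x + e ∈ TwoSidedIdeal.jacobson (⊥ : TwoSidedIdeal R))) := by
  set J := TwoSidedIdeal.jacobson (⊥ : TwoSidedIdeal R) with hJ
  constructor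
  · intro h
    refine ⟨?_, fun x _ => h x⟩
    intro y
    obtain ⟨x, rfl⟩ := Quotient.mk''_surjective y
    obtain ⟨e, ⟨he, hxe⟩, -⟩ := h x
    have heq : (e : J.ringCon.Quotient) * e = e := by
      rw [← RingCon.coe_mul, he]
    rcases hxe with hx | hx
    · rw [aux_mem_iff, RingCon.coe_sub, sub_eq_zero] at hx
      left
      show (x : J.ringCon.Quotient) ^ 2 = x
      rw [hx, sq, heq]
    · rw [aux_mem_iff, RingCon.coe_add, add_eq_zero_iff_eq_neg] at hx
      right
      show (x : J.ringCon.Quotient) ^ 2 = -x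
      rw [hx, neg_neg, sq, neg_mul_neg, heq]
  · rintro ⟨hsb, hlift⟩ x
    rcases hsb x with hx | hx
    · apply hlift
      rw [aux_mem_iff, RingCon.coe_sub, sub_eq_zero, RingCon.coe_pow]
      exact hx
    · have : (-x) ^ 2 - (-x) ∈ J := by
        rw [aux_mem_iff, RingCon.coe_sub, RingCon.coe_pow, RingCon.coe_neg, sq, neg_mul_neg,
          ← sq, hx, sub_neg_eq_add, neg_add_cancel]
      obtain ⟨e, ⟨he, hxe⟩, hu⟩ := hlift (-x) this
      refine ⟨e, ⟨he, ?_⟩, fun f ⟨hf, hxf⟩ => hu f ⟨hf, ?_⟩⟩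
      · rcases hxe with h1 | h1
        · right; rw [show x + e = -(-x - e) by abel]; exact J.neg_mem h1
        · left; rw [show x - e = -(-x + e) by abel]; exact J.neg_mem h1
      · rcases hxf with h1 | h1
        · right; rw [show -x + f = -(x - f) by abel]; exact J.neg_mem h1
        · left; rw [show -x - f = -(x + f) by abel]; exact J.neg_mem h1
end

section
/- For a commutative ring R, R is uniquely weakly nil clean if and only if R/Nil(R) is semi boolean and idempotents lift uniquely weakly modulo Nil(R). -/
/-- A commutative ring `R` is uniquely weakly nil clean if and only if `R/Nil(R)` is semi
boolean and idempotents lift uniquely weakly modulo `Nil(R)`. -/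
theorem uniquelyWeaklyNilClean_iff {R : Type*} [CommRing R] :
    (∀ x : R, ∃! e : R, IsIdempotentElem e ∧
        (x - e ∈ nilradical R ∨ x + e ∈ nilradical R)) ↔
      ((∀ y : R ⧸ nilradical R, y ^ 2 = y ∨ y ^ 2 = -y) ∧
        ∀ x : R, x ^ 2 - x ∈ nilradical R →
          ∃! e : R, IsIdempotentElem e ∧
            (x - e ∈ nilradical R ∨ x + e ∈ nilradical R)) := by
  constructor
  · intro h
    constructor
    · intro y
      obtain ⟨x, rfl⟩ := Ideal.Quotient.mk_surjective y
      obtain ⟨e, ⟨he, hor⟩, _⟩ := h x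
      have heq : (Ideal.Quotient.mk (nilradical R) e) ^ 2
          = Ideal.Quotient.mk (nilradical R) e := by
        rw [← map_pow, sq, he]
      rcases hor with hn | hn
      · left
        have : Ideal.Quotient.mk (nilradical R) x = Ideal.Quotient.mk (nilradical R) e := by
          rw [Ideal.Quotient.eq]; exact hn
        rw [this, heq]
      · right
        have : Ideal.Quotient.mk (nilradical R) x = -Ideal.Quotient.mk (nilradical R) e := by
          rw [eq_neg_iff_add_eq_zero, ← map_add, Ideal.Quotient.eq_zero_iff_mem]; exact hn
        rw [this, neg_pow, heq]; ring
    · intro x _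
      exact h x
  · rintro ⟨hsb, hlift⟩ x
    rcases hsb (Ideal.Quotient.mk (nilradical R) x) with h | h
    · apply hlift
      rw [← Ideal.Quotient.eq_zero_iff_mem, map_sub, map_pow, sub_eq_zero]
      exact h
    · have hmem : (-x) ^ 2 - (-x) ∈ nilradical R := by
        rw [← Ideal.Quotient.eq_zero_iff_mem, map_sub, map_pow, map_neg, neg_pow, sub_eq_zero]
        simpa using h
      obtain ⟨e, ⟨he, hor⟩, hu⟩ := hlift (-x) hmem
      refine ⟨e, ⟨he, ?_⟩, ?_⟩
      · rcases hor with hn | hn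
        · right; simpa [add_comm, sub_eq_add_neg] using (nilradical R).neg_mem hn
        · left; simpa [add_comm, sub_eq_add_neg] using (nilradical R).neg_mem hn
      · rintro f ⟨hf, hor'⟩
        apply hu
        refine ⟨hf, ?_⟩
        rcases hor' with hn | hn
        · right; simpa [add_comm, sub_eq_add_neg] using (nilradical R).neg_mem hn
        · left; simpa [add_comm, sub_eq_add_neg] using (nilradical R).neg_mem hn
end
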